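/- Let p ≥ 5 be a prime, p ≠ 11, such that −11 is not a square in 𝔽_p. Then the number of solutions (x₁,…,x₅) ∈ 𝔽_p⁵ of x₁²x₂ + x₂²x₃ + x₃²x₄ + x₄²x₅ + x₅²x₁ = 0 equals p⁴; equivalently, the Klein cubic threefold has exactly 1 + p + p² + p³ points in ℙ⁴(𝔽_p). -/

import Mathlib

open Finset

namespace KleinAux

variable {p : ℕ} [hfp : Fact p.Prime]

abbrev K5 (p : ℕ) := ZMod p × ZMod p × ZMod p × ZMod p × ZMod p

def FF (v : K5 p) : ZMod p :=
  v.1^2*v.2.1 + v.2.1^2*v.2.2.1 + v.2.2.1^2*v.2.2.2.1 + v.2.2.2.1^2*v.2.2.2.2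
    + v.2.2.2.2^2*v.1

def SS (v : K5 p) : ZMod p := v.1 + v.2.1 + v.2.2.1 + v.2.2.2.1 + v.2.2.2.2

lemma cardK : (univ : Finset (ZMod p)).card = p := by
  simp [ZMod.card]

lemma card_ne0 : (univ.filter (fun x : ZMod p => x ≠ 0)).card = p - 1 := by
  rw [filter_ne', card_erase_of_mem (mem_univ _)]; simp [cardK]

lemma card_ne01 : (univ.filter (fun x : ZMod p => x ≠ 0 ∧ x ≠ 1)).card = p - 2 := by
  have h : (univ.filter (fun x : ZMod p => x ≠ 0 ∧ x ≠ 1)) = univ \ {0, 1} := by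
    ext x; simp [mem_sdiff]
  rw [h, card_sdiff_of_subset (subset_univ _), cardK]
  have h1 : (0 : ZMod p) ≠ 1 := fun h => one_ne_zero h.symm
  rw [card_insert_of_notMem (by simp [h1]), card_singleton]

lemma card_trueKK : (univ.filter fun _ : ZMod p × ZMod p => True).card = p * p := by
  simp [card_univ, ZMod.card]

lemma card_filter_prod {α β : Type*} [Fintype α] [Fintype β]
    (P : α → Prop) (Q : β → Prop) [DecidablePred P] [DecidablePred Q] :
    (univ.filter fun x : α × β => P x.1 ∧ Q x.2).card
      = (univ.filter P).card * (univ.filter Q).card := by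
  rw [← Finset.univ_product_univ, Finset.filter_product, Finset.card_product]

lemma card_filter_fst {α β : Type*} [Fintype α] [Fintype β]
    (P : α → Prop) [DecidablePred P] :
    (univ.filter fun x : α × β => P x.1).card = (univ.filter P).card * Fintype.card β := by
  rw [← Finset.univ_product_univ, Finset.filter_product_left, Finset.card_product, card_univ]

/- target-set cardinalities -/
lemma tarA : (univ.filter fun w : ZMod p × ZMod p => w.1 ≠ 0 ∧ w.2 ≠ 0).card
    = (p-1)*(p-1) := by
  have h := card_filter_prod (fun y : ZMod p => y ≠ 0) (fun y : ZMod p => y ≠ 0)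
  rw [card_ne0] at h
  exact h

lemma tarB : (univ.filter fun w : ZMod p × ZMod p => w.1 ≠ 0).card = (p-1)*p := by
  have h := card_filter_fst (β := ZMod p) (fun y : ZMod p => y ≠ 0)
  rw [card_ne0, ZMod.card] at h
  exact h

lemma tarC : (univ.filter fun w : ZMod p × ZMod p × ZMod p => w.1 ≠ 0).card
    = (p-1)*(p*p) := by
  have h := card_filter_fst (β := ZMod p × ZMod p) (fun y : ZMod p => y ≠ 0)
  rw [card_ne0, Fintype.card_prod, ZMod.card] at h
  exact h

lemma tarDinner : (univ.filter fun z : ZMod p × ZMod p =>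
    (z.1 ≠ 0 ∧ z.1 ≠ 1) ∧ z.2 ≠ 0).card = (p-2)*(p-1) := by
  have h := card_filter_prod (fun y : ZMod p => y ≠ 0 ∧ y ≠ 1) (fun y : ZMod p => y ≠ 0)
  rw [card_ne0, card_ne01] at h
  exact h

lemma tarD : (univ.filter fun w : ZMod p × ZMod p × ZMod p =>
    w.1 ≠ 0 ∧ ((w.2.1 ≠ 0 ∧ w.2.1 ≠ 1) ∧ w.2.2 ≠ 0)).card = (p-1)*((p-2)*(p-1)) := by
  have h := card_filter_prod (fun y : ZMod p => y ≠ 0)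
    (fun z : ZMod p × ZMod p => (z.1 ≠ 0 ∧ z.1 ≠ 1) ∧ z.2 ≠ 0)
  rw [card_ne0, tarDinner] at h
  exact h

lemma tarEinner : (univ.filter fun z : ZMod p × ZMod p =>
    z.1 ≠ 0 ∧ (z.2 ≠ 0 ∧ z.2 ≠ 1)).card = (p-1)*(p-2) := by
  have h := card_filter_prod (fun y : ZMod p => y ≠ 0) (fun y : ZMod p => y ≠ 0 ∧ y ≠ 1)
  rw [card_ne0, card_ne01] at h
  exact h

lemma tarE : (univ.filter fun w : ZMod p × ZMod p × ZMod p =>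
    w.1 ≠ 0 ∧ (w.2.1 ≠ 0 ∧ (w.2.2 ≠ 0 ∧ w.2.2 ≠ 1))).card = (p-1)*((p-1)*(p-2)) := by
  have h := card_filter_prod (fun y : ZMod p => y ≠ 0)
    (fun z : ZMod p × ZMod p => z.1 ≠ 0 ∧ (z.2 ≠ 0 ∧ z.2 ≠ 1))
  rw [card_ne0, tarEinner] at h
  exact h

lemma split_card {γ : Type*} [Fintype γ] (C Q C1 C2 : γ → Prop)
    [DecidablePred C] [DecidablePred Q] [DecidablePred C1] [DecidablePred C2]
    (h1 : ∀ v, C1 v ↔ C v ∧ Q v) (h2 : ∀ v, C2 v ↔ C v ∧ ¬ Q v) :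
    (univ.filter C).card = (univ.filter C1).card + (univ.filter C2).card := by
  have h := card_filter_add_card_filter_not (s := (univ : Finset γ).filter C) (p := Q)
  rw [filter_filter, filter_filter] at h
  rw [← h]
  congr 1
  · exact congrArg card (filter_congr fun v _ => by rw [h1 v])
  · exact congrArg card (filter_congr fun v _ => by rw [h2 v])

lemma card_nbij'' {α β : Type*} {s : Finset α} {t : Finset β} (i : α → β) (j : β → α)
    (hi : ∀ a ∈ s, i a ∈ t) (hj : ∀ a ∈ t, j a ∈ s)
    (left_inv : ∀ a ∈ s, j (i a) = a) (right_inv : ∀ a ∈ t, i (j a) = a) : s.card = t.card :=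
  card_nbij' i j (fun a ha => hi a ha) (fun a ha => hj a ha) (fun a ha => left_inv a ha)
    (fun a ha => right_inv a ha)

/-- leaf 1a : a = 0, d ≠ 0 -/
lemma leaf1a :
    (univ.filter fun v : K5 p => v.1 = 0 ∧ v.2.2.2.1 ≠ 0 ∧ FF v = 0).card
      = (p-1)*(p*p) := by
  rw [← tarC]
  apply card_nbij'' (i := fun v => (v.2.2.2.1, v.2.1, v.2.2.1))
    (j := fun w => (0, w.2.1, w.2.2, w.1, -(w.2.1^2*w.2.2 + w.2.2^2*w.1) / w.1^2))
  · rintro ⟨a,b,c,d,e⟩ hv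
    simp only [mem_filter, mem_univ, true_and] at hv; simp only [FF] at hv
    rw [mem_filter]
    exact ⟨mem_univ _, hv.2.1⟩
  · rintro ⟨d,b,c⟩ hw
    simp only [mem_filter, mem_univ, true_and] at hw
    rw [mem_filter]
    refine ⟨mem_univ _, rfl, hw, ?_⟩
    simp only [FF]
    field_simp
    ring
  · rintro ⟨a,b,c,d,e⟩ hv
    simp only [mem_filter, mem_univ, true_and] at hv; simp only [FF] at hv
    obtain ⟨ha, hd, hf⟩ := hv
    subst ha
    simp only [Prod.mk.injEq]
    field_simp
    simp only [true_and, and_true]; linear_combination -hf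
  · rintro ⟨d,b,c⟩ hw
    rfl

/-- leaf 1bi : a = 0, b = 0, d = 0 -/
lemma leaf1bi :
    (univ.filter fun v : K5 p => v.1 = 0 ∧ v.2.1 = 0 ∧ v.2.2.2.1 = 0 ∧ FF v = 0).card
      = p*p := by
  rw [← @card_trueKK p]
  apply card_nbij'' (i := fun v => (v.2.2.1, v.2.2.2.2))
    (j := fun w => (0, 0, w.1, 0, w.2))
  · rintro ⟨a,b,c,d,e⟩ hv
    simp
  · rintro ⟨c,e⟩ hw
    rw [mem_filter]
    refine ⟨mem_univ _, rfl, rfl, rfl, ?_⟩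
    simp only [FF]
    ring
  · rintro ⟨a,b,c,d,e⟩ hv
    simp only [mem_filter, mem_univ, true_and] at hv; simp only [FF] at hv
    obtain ⟨ha, hb, hd, hf⟩ := hv
    subst ha; subst hb; subst hd
    rfl
  · rintro ⟨c,e⟩ hw
    rfl

/-- leaf 1bii : a = 0, b ≠ 0, d = 0 (forces c = 0) -/
lemma leaf1bii :
    (univ.filter fun v : K5 p => v.1 = 0 ∧ v.2.1 ≠ 0 ∧ v.2.2.2.1 = 0 ∧ FF v = 0).card
      = (p-1)*p := by
  rw [← tarB]
  apply card_nbij'' (i := fun v => (v.2.1, v.2.2.2.2))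
    (j := fun w => (0, w.1, 0, 0, w.2))
  · rintro ⟨a,b,c,d,e⟩ hv
    simp only [mem_filter, mem_univ, true_and] at hv; simp only [FF] at hv
    rw [mem_filter]
    exact ⟨mem_univ _, hv.2.1⟩
  · rintro ⟨b,e⟩ hw
    simp only [mem_filter, mem_univ, true_and] at hw
    rw [mem_filter]
    refine ⟨mem_univ _, rfl, hw, rfl, ?_⟩
    simp only [FF]
    ring
  · rintro ⟨a,b,c,d,e⟩ hv
    simp only [mem_filter, mem_univ, true_and] at hv; simp only [FF] at hv
    obtain ⟨ha, hb, hd, hf⟩ := hv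
    subst ha; subst hd
    have hc : c = 0 := by
      have h2 : b^2*c = 0 := by linear_combination hf
      rcases mul_eq_zero.mp h2 with h3 | h3
      · exact absurd ((pow_eq_zero_iff two_ne_zero).mp h3) hb
      · exact h3
    subst hc
    rfl
  · rintro ⟨b,e⟩ hw
    rfl

/-- leaf 2ai : a ≠ 0, b = 0, c = 0, e ≠ 0 (forces d ≠ 0, a determined) -/
lemma leaf2ai :
    (univ.filter fun v : K5 p => v.1 ≠ 0 ∧ v.2.1 = 0 ∧ v.2.2.1 = 0 ∧ v.2.2.2.2 ≠ 0
      ∧ FF v = 0).card = (p-1)*(p-1) := by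
  rw [← tarA]
  apply card_nbij'' (i := fun v => (v.2.2.2.1, v.2.2.2.2))
    (j := fun w => (-(w.1^2)/w.2, 0, 0, w.1, w.2))
  · rintro ⟨a,b,c,d,e⟩ hv
    simp only [mem_filter, mem_univ, true_and] at hv; simp only [FF] at hv
    obtain ⟨ha, hb, hc, he, hf⟩ := hv
    subst hb; subst hc
    rw [mem_filter]
    refine ⟨mem_univ _, ?_, he⟩
    intro hd
    subst hd
    apply ha
    have h2 : e^2*a = 0 := by linear_combination hf
    rcases mul_eq_zero.mp h2 with h3 | h3
    · exact absurd ((pow_eq_zero_iff two_ne_zero).mp h3) he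
    · exact h3
  · rintro ⟨d,e⟩ hw
    simp only [mem_filter, mem_univ, true_and] at hw
    obtain ⟨hd, he⟩ := hw
    rw [mem_filter]
    refine ⟨mem_univ _, div_ne_zero (neg_ne_zero.mpr (pow_ne_zero 2 hd)) he, rfl, rfl, he, ?_⟩
    simp only [FF]
    field_simp
    ring
  · rintro ⟨a,b,c,d,e⟩ hv
    simp only [mem_filter, mem_univ, true_and] at hv; simp only [FF] at hv
    obtain ⟨ha, hb, hc, he, hf⟩ := hv
    subst hb; subst hc
    simp only [Prod.mk.injEq]
    have h2 : e*(d^2 + e*a) = 0 := by linear_combination hf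
    have h3 : d^2 + e*a = 0 := by
      rcases mul_eq_zero.mp h2 with h3 | h3
      · exact absurd h3 he
      · exact h3
    field_simp
    simp only [true_and, and_true]; linear_combination -h3
  · rintro ⟨d,e⟩ hw
    rfl

/-- leaf 2aii : a ≠ 0, b = 0, c ≠ 0, e ≠ 0 -/
lemma leaf2aii :
    (univ.filter fun v : K5 p => v.1 ≠ 0 ∧ v.2.1 = 0 ∧ v.2.2.1 ≠ 0 ∧ v.2.2.2.2 ≠ 0
      ∧ FF v = 0).card = (p-1)*((p-2)*(p-1)) := by
  rw [← tarD]
  apply card_nbij'' (i := fun v => (v.2.2.1, (-(v.2.2.2.1*v.2.2.2.2)/v.2.2.1^2, v.2.2.2.2)))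
    (j := fun w => (w.1^4*(w.2.1-w.2.1^2)/w.2.2^3, 0, w.1, -(w.1^2*w.2.1)/w.2.2, w.2.2))
  · rintro ⟨a,b,c,d,e⟩ hv
    simp only [mem_filter, mem_univ, true_and] at hv; simp only [FF] at hv
    obtain ⟨ha, hb, hc, he, hf⟩ := hv
    subst hb
    have hd : d ≠ 0 := by
      intro hd; subst hd
      apply ha
      have h2 : e^2*a = 0 := by linear_combination hf
      rcases mul_eq_zero.mp h2 with h3 | h3
      · exact absurd ((pow_eq_zero_iff two_ne_zero).mp h3) he
      · exact h3
    rw [mem_filter]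
    refine ⟨mem_univ _, hc, ⟨?_, ?_⟩, he⟩
    · exact div_ne_zero (neg_ne_zero.mpr (mul_ne_zero hd he)) (pow_ne_zero 2 hc)
    · intro h
      rw [div_eq_one_iff_eq (pow_ne_zero 2 hc)] at h
      apply ha
      have h2 : e^2*a = 0 := by linear_combination hf + d*h
      rcases mul_eq_zero.mp h2 with h3 | h3
      · exact absurd ((pow_eq_zero_iff two_ne_zero).mp h3) he
      · exact h3
  · rintro ⟨c,t,e⟩ hw
    simp only [mem_filter, mem_univ, true_and] at hw
    obtain ⟨hc, ⟨ht0, ht1⟩, he⟩ := hw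
    have hnum : c^4*(t-t^2) ≠ 0 := by
      intro h
      rcases mul_eq_zero.mp h with h3 | h3
      · exact hc ((pow_eq_zero_iff (by norm_num)).mp h3)
      · have h4 : t*(1-t) = 0 := by linear_combination h3
        rcases mul_eq_zero.mp h4 with h5 | h5
        · exact ht0 h5
        · exact ht1 (by linear_combination -h5)
    rw [mem_filter]
    refine ⟨mem_univ _, div_ne_zero hnum (pow_ne_zero 3 he), rfl, hc, he, ?_⟩
    simp only [FF]
    field_simp
    ring
  · rintro ⟨a,b,c,d,e⟩ hv
    simp only [mem_filter, mem_univ, true_and] at hv; simp only [FF] at hv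
    obtain ⟨ha, hb, hc, he, hf⟩ := hv
    subst hb
    simp only [Prod.mk.injEq]
    refine ⟨?_, ?_⟩
    · field_simp
      linear_combination -hf
    · field_simp; simp
  · rintro ⟨c,t,e⟩ hw
    simp only [mem_filter, mem_univ, true_and] at hw
    obtain ⟨hc, ⟨ht0, ht1⟩, he⟩ := hw
    simp only [Prod.mk.injEq]
    field_simp; simp

/-- leaf 2bi : a ≠ 0, b = 0, c = 0, e = 0 -/
lemma leaf2bi :
    (univ.filter fun v : K5 p => v.1 ≠ 0 ∧ v.2.1 = 0 ∧ v.2.2.1 = 0 ∧ v.2.2.2.2 = 0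
      ∧ FF v = 0).card = (p-1)*p := by
  rw [← tarB]
  apply card_nbij'' (i := fun v => (v.1, v.2.2.2.1))
    (j := fun w => (w.1, 0, 0, w.2, 0))
  · rintro ⟨a,b,c,d,e⟩ hv
    simp only [mem_filter, mem_univ, true_and] at hv; simp only [FF] at hv
    rw [mem_filter]
    exact ⟨mem_univ _, hv.1⟩
  · rintro ⟨a,d⟩ hw
    simp only [mem_filter, mem_univ, true_and] at hw
    rw [mem_filter]
    refine ⟨mem_univ _, hw, rfl, rfl, rfl, ?_⟩
    simp only [FF]
    ring
  · rintro ⟨a,b,c,d,e⟩ hv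
    simp only [mem_filter, mem_univ, true_and] at hv; simp only [FF] at hv
    obtain ⟨ha, hb, hc, he, hf⟩ := hv
    subst hb; subst hc; subst he
    rfl
  · rintro ⟨a,d⟩ hw
    rfl

/-- leaf 2bii : a ≠ 0, b = 0, c ≠ 0, e = 0 (forces d = 0) -/
lemma leaf2bii :
    (univ.filter fun v : K5 p => v.1 ≠ 0 ∧ v.2.1 = 0 ∧ v.2.2.1 ≠ 0 ∧ v.2.2.2.2 = 0
      ∧ FF v = 0).card = (p-1)*(p-1) := by
  rw [← tarA]
  apply card_nbij'' (i := fun v => (v.1, v.2.2.1))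
    (j := fun w => (w.1, 0, w.2, 0, 0))
  · rintro ⟨a,b,c,d,e⟩ hv
    simp only [mem_filter, mem_univ, true_and] at hv; simp only [FF] at hv
    rw [mem_filter]
    exact ⟨mem_univ _, hv.1, hv.2.2.1⟩
  · rintro ⟨a,c⟩ hw
    simp only [mem_filter, mem_univ, true_and] at hw
    rw [mem_filter]
    refine ⟨mem_univ _, hw.1, rfl, hw.2, rfl, ?_⟩
    simp only [FF]
    ring
  · rintro ⟨a,b,c,d,e⟩ hv
    simp only [mem_filter, mem_univ, true_and] at hv; simp only [FF] at hv
    obtain ⟨ha, hb, hc, he, hf⟩ := hv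
    subst hb; subst he
    have hd : d = 0 := by
      have h2 : c^2*d = 0 := by linear_combination hf
      rcases mul_eq_zero.mp h2 with h3 | h3
      · exact absurd ((pow_eq_zero_iff two_ne_zero).mp h3) hc
      · exact h3
    subst hd
    rfl
  · rintro ⟨a,c⟩ hw
    rfl

/-- leaf 3i : a ≠ 0, b ≠ 0, c = 0, d = 0 (forces e ≠ 0, b determined) -/
lemma leaf3i :
    (univ.filter fun v : K5 p => v.1 ≠ 0 ∧ v.2.1 ≠ 0 ∧ v.2.2.1 = 0 ∧ v.2.2.2.1 = 0
      ∧ FF v = 0).card = (p-1)*(p-1) := by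
  rw [← tarA]
  apply card_nbij'' (i := fun v => (v.1, v.2.2.2.2))
    (j := fun w => (w.1, -(w.2^2)/w.1, 0, 0, w.2))
  · rintro ⟨a,b,c,d,e⟩ hv
    simp only [mem_filter, mem_univ, true_and] at hv; simp only [FF] at hv
    obtain ⟨ha, hb, hc, hd, hf⟩ := hv
    subst hc; subst hd
    rw [mem_filter]
    refine ⟨mem_univ _, ha, ?_⟩
    intro he; subst he
    apply hb
    have h2 : a^2*b = 0 := by linear_combination hf
    rcases mul_eq_zero.mp h2 with h3 | h3
    · exact absurd ((pow_eq_zero_iff two_ne_zero).mp h3) ha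
    · exact h3
  · rintro ⟨a,e⟩ hw
    simp only [mem_filter, mem_univ, true_and] at hw
    obtain ⟨ha, he⟩ := hw
    rw [mem_filter]
    refine ⟨mem_univ _, ha, div_ne_zero (neg_ne_zero.mpr (pow_ne_zero 2 he)) ha, rfl, rfl, ?_⟩
    simp only [FF]
    field_simp
    ring
  · rintro ⟨a,b,c,d,e⟩ hv
    simp only [mem_filter, mem_univ, true_and] at hv; simp only [FF] at hv
    obtain ⟨ha, hb, hc, hd, hf⟩ := hv
    subst hc; subst hd
    simp only [Prod.mk.injEq]
    have h2 : a*(a*b + e^2) = 0 := by linear_combination hf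
    have h3 : a*b + e^2 = 0 := by
      rcases mul_eq_zero.mp h2 with h3 | h3
      · exact absurd h3 ha
      · exact h3
    field_simp
    simp only [true_and, and_true]; linear_combination -h3
  · rintro ⟨a,e⟩ hw
    rfl

/-- leaf 3ii : a ≠ 0, b ≠ 0, c = 0, d ≠ 0 -/
lemma leaf3ii :
    (univ.filter fun v : K5 p => v.1 ≠ 0 ∧ v.2.1 ≠ 0 ∧ v.2.2.1 = 0 ∧ v.2.2.2.1 ≠ 0
      ∧ FF v = 0).card = (p-1)*((p-1)*(p-2)) := by
  rw [← tarE]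
  apply card_nbij'' (i := fun v => (v.1, (v.2.2.2.1, -(v.2.2.2.2*v.1)/v.2.2.2.1^2)))
    (j := fun w => (w.1, w.2.1^4*(w.2.2-w.2.2^2)/w.1^3, 0, w.2.1, -(w.2.1^2*w.2.2)/w.1))
  · rintro ⟨a,b,c,d,e⟩ hv
    simp only [mem_filter, mem_univ, true_and] at hv; simp only [FF] at hv
    obtain ⟨ha, hb, hc, hd, hf⟩ := hv
    subst hc
    have he : e ≠ 0 := by
      intro he; subst he
      apply hb
      have h2 : a^2*b = 0 := by linear_combination hf
      rcases mul_eq_zero.mp h2 with h3 | h3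
      · exact absurd ((pow_eq_zero_iff two_ne_zero).mp h3) ha
      · exact h3
    rw [mem_filter]
    refine ⟨mem_univ _, ha, hd, ?_, ?_⟩
    · exact div_ne_zero (neg_ne_zero.mpr (mul_ne_zero he ha)) (pow_ne_zero 2 hd)
    · intro h
      rw [div_eq_one_iff_eq (pow_ne_zero 2 hd)] at h
      apply hb
      have h2 : a^2*b = 0 := by linear_combination hf + e*h
      rcases mul_eq_zero.mp h2 with h3 | h3
      · exact absurd ((pow_eq_zero_iff two_ne_zero).mp h3) ha
      · exact h3
  · rintro ⟨a,d,t⟩ hw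
    simp only [mem_filter, mem_univ, true_and] at hw
    obtain ⟨ha, hd, ht0, ht1⟩ := hw
    have hnum : d^4*(t-t^2) ≠ 0 := by
      intro h
      rcases mul_eq_zero.mp h with h3 | h3
      · exact hd ((pow_eq_zero_iff (by norm_num)).mp h3)
      · have h4 : t*(1-t) = 0 := by linear_combination h3
        rcases mul_eq_zero.mp h4 with h5 | h5
        · exact ht0 h5
        · exact ht1 (by linear_combination -h5)
    rw [mem_filter]
    refine ⟨mem_univ _, ha, div_ne_zero hnum (pow_ne_zero 3 ha), rfl, hd, ?_⟩
    simp only [FF]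
    field_simp
    ring
  · rintro ⟨a,b,c,d,e⟩ hv
    simp only [mem_filter, mem_univ, true_and] at hv; simp only [FF] at hv
    obtain ⟨ha, hb, hc, hd, hf⟩ := hv
    subst hc
    simp only [Prod.mk.injEq]
    refine ⟨?_, ?_⟩
    · trivial
    · field_simp
      simp only [true_and, and_true]; linear_combination -hf
  · rintro ⟨a,d,t⟩ hw
    simp only [mem_filter, mem_univ, true_and] at hw
    obtain ⟨ha, hd, ht0, ht1⟩ := hw
    simp only [Prod.mk.injEq]
    field_simp; simp

/-- leaf 4i : a,b,c ≠ 0, d = 0, e = 0 (c determined) -/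
lemma leaf4i :
    (univ.filter fun v : K5 p => v.1 ≠ 0 ∧ v.2.1 ≠ 0 ∧ v.2.2.1 ≠ 0 ∧ v.2.2.2.1 = 0
      ∧ v.2.2.2.2 = 0 ∧ FF v = 0).card = (p-1)*(p-1) := by
  rw [← tarA]
  apply card_nbij'' (i := fun v => (v.1, v.2.1))
    (j := fun w => (w.1, w.2, -(w.1^2)/w.2, 0, 0))
  · rintro ⟨a,b,c,d,e⟩ hv
    simp only [mem_filter, mem_univ, true_and] at hv; simp only [FF] at hv
    rw [mem_filter]
    exact ⟨mem_univ _, hv.1, hv.2.1⟩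
  · rintro ⟨a,b⟩ hw
    simp only [mem_filter, mem_univ, true_and] at hw
    obtain ⟨ha, hb⟩ := hw
    rw [mem_filter]
    refine ⟨mem_univ _, ha, hb, div_ne_zero (neg_ne_zero.mpr (pow_ne_zero 2 ha)) hb,
      rfl, rfl, ?_⟩
    simp only [FF]
    field_simp
    ring
  · rintro ⟨a,b,c,d,e⟩ hv
    simp only [mem_filter, mem_univ, true_and] at hv; simp only [FF] at hv
    obtain ⟨ha, hb, hc, hd, he, hf⟩ := hv
    subst hd; subst he
    simp only [Prod.mk.injEq]
    have h2 : b*(a^2 + b*c) = 0 := by linear_combination hf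
    have h3 : a^2 + b*c = 0 := by
      rcases mul_eq_zero.mp h2 with h3 | h3
      · exact absurd h3 hb
      · exact h3
    field_simp
    simp only [true_and, and_true]; linear_combination -h3
  · rintro ⟨a,b⟩ hw
    rfl

/-- leaf 4ii : a,b,c ≠ 0, d = 0, e ≠ 0 -/
lemma leaf4ii :
    (univ.filter fun v : K5 p => v.1 ≠ 0 ∧ v.2.1 ≠ 0 ∧ v.2.2.1 ≠ 0 ∧ v.2.2.2.1 = 0
      ∧ v.2.2.2.2 ≠ 0 ∧ FF v = 0).card = (p-1)*((p-2)*(p-1)) := by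
  rw [← tarD]
  apply card_nbij'' (i := fun v => (v.1, (-(v.2.1*v.1)/v.2.2.2.2^2, v.2.2.2.2)))
    (j := fun w => (w.1, -(w.2.2^2*w.2.1)/w.1, w.1^3*(w.2.1-1)/(w.2.2^2*w.2.1^2), 0, w.2.2))
  · rintro ⟨a,b,c,d,e⟩ hv
    simp only [mem_filter, mem_univ, true_and] at hv; simp only [FF] at hv
    obtain ⟨ha, hb, hc, hd, he, hf⟩ := hv
    subst hd
    rw [mem_filter]
    refine ⟨mem_univ _, ha, ⟨?_, ?_⟩, he⟩
    · exact div_ne_zero (neg_ne_zero.mpr (mul_ne_zero hb ha)) (pow_ne_zero 2 he)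
    · intro h
      rw [div_eq_one_iff_eq (pow_ne_zero 2 he)] at h
      apply hc
      have h2 : b^2*c = 0 := by linear_combination hf + a*h
      rcases mul_eq_zero.mp h2 with h3 | h3
      · exact absurd ((pow_eq_zero_iff two_ne_zero).mp h3) hb
      · exact h3
  · rintro ⟨a,t,e⟩ hw
    simp only [mem_filter, mem_univ, true_and] at hw
    obtain ⟨ha, ⟨ht0, ht1⟩, he⟩ := hw
    rw [mem_filter]
    refine ⟨mem_univ _, ha, ?_, ?_, rfl, he, ?_⟩
    · exact div_ne_zero (neg_ne_zero.mpr (mul_ne_zero (pow_ne_zero 2 he) ht0)) ha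
    · apply div_ne_zero _ (mul_ne_zero (pow_ne_zero 2 he) (pow_ne_zero 2 ht0))
      exact mul_ne_zero (pow_ne_zero 3 ha) (sub_ne_zero_of_ne ht1)
    · simp only [FF]
      have h1 : (-(e^2*t)/a)^2*(a^3*(t-1)/(e^2*t^2)) = a*e^2*(t-1) := by
        field_simp
      rw [h1]
      field_simp
      ring
  · rintro ⟨a,b,c,d,e⟩ hv
    simp only [mem_filter, mem_univ, true_and] at hv; simp only [FF] at hv
    obtain ⟨ha, hb, hc, hd, he, hf⟩ := hv
    subst hd
    simp only [Prod.mk.injEq]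
    refine ⟨?_, ?_⟩
    · trivial
    · field_simp
      simp only [true_and, and_true]; linear_combination -hf
  · rintro ⟨a,t,e⟩ hw
    simp only [mem_filter, mem_univ, true_and] at hw
    obtain ⟨ha, ⟨ht0, ht1⟩, he⟩ := hw
    simp only [Prod.mk.injEq]
    field_simp; simp

/-- leaf 5 : a,b,c,d ≠ 0, e = 0 -/
lemma leaf5 :
    (univ.filter fun v : K5 p => v.1 ≠ 0 ∧ v.2.1 ≠ 0 ∧ v.2.2.1 ≠ 0 ∧ v.2.2.2.1 ≠ 0
      ∧ v.2.2.2.2 = 0 ∧ FF v = 0).card = (p-1)*((p-1)*(p-2)) := by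
  rw [← tarE]
  apply card_nbij'' (i := fun v => (v.1, v.2.1, -(v.2.2.1 * v.2.1) / v.1^2))
    (j := fun w => (w.1, w.2.1, -(w.1^2 * w.2.2) / w.2.1,
        w.2.1^3*(w.2.2-1) / (w.1^2*w.2.2^2), 0))
  · rintro ⟨a,b,c,d,e⟩ hv
    simp only [mem_filter, mem_univ, true_and] at hv; simp only [FF] at hv
    obtain ⟨ha, hb, hc, hd, he, hf⟩ := hv
    subst he
    have ha2 : (a:ZMod p)^2 ≠ 0 := pow_ne_zero 2 ha
    rw [mem_filter]
    refine ⟨mem_univ _, ha, hb, ?_, ?_⟩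
    · rw [div_ne_zero_iff]
      exact ⟨by simp [hc, hb], ha2⟩
    · intro h
      rw [div_eq_one_iff_eq ha2] at h
      have h2 : c^2*d = 0 := by linear_combination hf + b*h
      rcases mul_eq_zero.mp h2 with h3 | h3
      · exact hc ((pow_eq_zero_iff two_ne_zero).mp h3)
      · exact hd h3
  · rintro ⟨a,b,t⟩ hw
    simp only [mem_filter, mem_univ, true_and] at hw
    obtain ⟨ha, hb, ht0, ht1⟩ := hw
    rw [mem_filter]
    refine ⟨mem_univ _, ha, hb, ?_, ?_, rfl, ?_⟩
    · rw [div_ne_zero_iff]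
      exact ⟨by simp [pow_eq_zero_iff, ha, ht0], hb⟩
    · rw [div_ne_zero_iff]
      constructor
      · intro h
        rcases mul_eq_zero.mp h with h2 | h2
        · exact hb ((pow_eq_zero_iff three_ne_zero).mp h2)
        · exact ht1 (by linear_combination h2)
      · exact mul_ne_zero (pow_ne_zero 2 ha) (pow_ne_zero 2 ht0)
    · simp only [FF]
      field_simp
      ring
  · rintro ⟨a,b,c,d,e⟩ hv
    simp only [mem_filter, mem_univ, true_and] at hv; simp only [FF] at hv
    obtain ⟨ha, hb, hc, hd, he, hf⟩ := hv
    subst he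
    simp only [Prod.mk.injEq]
    refine ⟨?_, ?_⟩
    · trivial
    · field_simp
      simp only [true_and, and_true]; linear_combination -hf
  · rintro ⟨a,b,t⟩ hw
    simp only [mem_filter, mem_univ, true_and] at hw
    obtain ⟨ha, hb, ht0, ht1⟩ := hw
    simp only [Prod.mk.injEq]
    field_simp; simp


/-! ### sum-zero sets -/

lemma tarNe3 : (univ.filter fun w : ZMod p × ZMod p × ZMod p =>
    w.1 ≠ 0 ∧ (w.2.1 ≠ 0 ∧ w.2.2 ≠ 0)).card = (p-1)*((p-1)*(p-1)) := by
  have h := card_filter_prod (fun y : ZMod p => y ≠ 0)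
    (fun z : ZMod p × ZMod p => z.1 ≠ 0 ∧ z.2 ≠ 0)
  rw [card_ne0, tarA] at h
  exact h

lemma tarNe4 : (univ.filter fun w : ZMod p × ZMod p × ZMod p × ZMod p =>
    w.1 ≠ 0 ∧ (w.2.1 ≠ 0 ∧ (w.2.2.1 ≠ 0 ∧ w.2.2.2 ≠ 0))).card
    = (p-1)*((p-1)*((p-1)*(p-1))) := by
  have h := card_filter_prod (fun y : ZMod p => y ≠ 0)
    (fun z : ZMod p × ZMod p × ZMod p => z.1 ≠ 0 ∧ (z.2.1 ≠ 0 ∧ z.2.2 ≠ 0))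
  rw [card_ne0, tarNe3] at h
  exact h

lemma cardZ2 : (univ.filter fun w : ZMod p × ZMod p =>
    w.1 ≠ 0 ∧ w.2 ≠ 0 ∧ w.1 + w.2 = 0).card = p - 1 := by
  rw [← @card_ne0 p]
  apply card_nbij'' (i := fun w => w.1) (j := fun x => (x, -x))
  · rintro ⟨a,b⟩ hv
    simp only [mem_filter, mem_univ, true_and] at hv ⊢
    exact hv.1
  · intro x hx
    simp only [mem_filter, mem_univ, true_and] at hx ⊢
    exact ⟨hx, neg_ne_zero.mpr hx, by ring⟩
  · rintro ⟨a,b⟩ hv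
    simp only [mem_filter, mem_univ, true_and] at hv
    obtain ⟨ha, hb, hs⟩ := hv
    simp only [Prod.mk.injEq, true_and, and_true]
    linear_combination -hs
  · intro x hx
    rfl

lemma bijZ3 : (univ.filter fun w : ZMod p × ZMod p × ZMod p =>
      w.1 ≠ 0 ∧ w.2.1 ≠ 0 ∧ w.2.2 ≠ 0 ∧ w.1 + w.2.1 + w.2.2 = 0).card
    = (univ.filter fun w : ZMod p × ZMod p =>
      (w.1 ≠ 0 ∧ w.2 ≠ 0) ∧ ¬ (w.1 + w.2 = 0)).card := by
  apply card_nbij'' (i := fun w => (w.1, w.2.1)) (j := fun w => (w.1, w.2, -(w.1 + w.2)))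
  · rintro ⟨a,b,c⟩ hv
    simp only [mem_filter, mem_univ, true_and] at hv ⊢
    obtain ⟨ha, hb, hc, hs⟩ := hv
    refine ⟨⟨ha, hb⟩, fun h => hc (by linear_combination hs - h)⟩
  · rintro ⟨a,b⟩ hw
    simp only [mem_filter, mem_univ, true_and] at hw ⊢
    obtain ⟨⟨ha, hb⟩, hs⟩ := hw
    exact ⟨ha, hb, neg_ne_zero.mpr hs, by ring⟩
  · rintro ⟨a,b,c⟩ hv
    simp only [mem_filter, mem_univ, true_and] at hv
    obtain ⟨ha, hb, hc, hs⟩ := hv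
    simp only [Prod.mk.injEq, true_and, and_true]
    linear_combination -hs
  · rintro ⟨a,b⟩ hw
    rfl

lemma bijZ4 : (univ.filter fun w : ZMod p × ZMod p × ZMod p × ZMod p =>
      w.1 ≠ 0 ∧ w.2.1 ≠ 0 ∧ w.2.2.1 ≠ 0 ∧ w.2.2.2 ≠ 0
        ∧ w.1 + w.2.1 + w.2.2.1 + w.2.2.2 = 0).card
    = (univ.filter fun w : ZMod p × ZMod p × ZMod p =>
      (w.1 ≠ 0 ∧ (w.2.1 ≠ 0 ∧ w.2.2 ≠ 0)) ∧ ¬ (w.1 + w.2.1 + w.2.2 = 0)).card := by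
  apply card_nbij'' (i := fun w => (w.1, w.2.1, w.2.2.1))
    (j := fun w => (w.1, w.2.1, w.2.2, -(w.1 + w.2.1 + w.2.2)))
  · rintro ⟨a,b,c,d⟩ hv
    simp only [mem_filter, mem_univ, true_and] at hv ⊢
    obtain ⟨ha, hb, hc, hd, hs⟩ := hv
    exact ⟨⟨ha, hb, hc⟩, fun h => hd (by linear_combination hs - h)⟩
  · rintro ⟨a,b,c⟩ hw
    simp only [mem_filter, mem_univ, true_and] at hw ⊢
    obtain ⟨⟨ha, hb, hc⟩, hs⟩ := hw
    exact ⟨ha, hb, hc, neg_ne_zero.mpr hs, by ring⟩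
  · rintro ⟨a,b,c,d⟩ hv
    simp only [mem_filter, mem_univ, true_and] at hv
    obtain ⟨ha, hb, hc, hd, hs⟩ := hv
    simp only [Prod.mk.injEq, true_and, and_true]
    linear_combination -hs
  · rintro ⟨a,b,c⟩ hw
    rfl

lemma bijZ5 : (univ.filter fun v : K5 p => v.1 ≠ 0 ∧ v.2.1 ≠ 0 ∧ v.2.2.1 ≠ 0
      ∧ v.2.2.2.1 ≠ 0 ∧ v.2.2.2.2 ≠ 0 ∧ SS v = 0).card
    = (univ.filter fun w : ZMod p × ZMod p × ZMod p × ZMod p =>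
      (w.1 ≠ 0 ∧ (w.2.1 ≠ 0 ∧ (w.2.2.1 ≠ 0 ∧ w.2.2.2 ≠ 0)))
        ∧ ¬ (w.1 + w.2.1 + w.2.2.1 + w.2.2.2 = 0)).card := by
  apply card_nbij'' (i := fun v => (v.1, v.2.1, v.2.2.1, v.2.2.2.1))
    (j := fun w => (w.1, w.2.1, w.2.2.1, w.2.2.2, -(w.1 + w.2.1 + w.2.2.1 + w.2.2.2)))
  · rintro ⟨a,b,c,d,e⟩ hv
    simp only [mem_filter, mem_univ, true_and] at hv ⊢; simp only [SS] at hv ⊢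
    obtain ⟨ha, hb, hc, hd, he, hs⟩ := hv
    exact ⟨⟨ha, hb, hc, hd⟩, fun h => he (by linear_combination hs - h)⟩
  · rintro ⟨a,b,c,d⟩ hw
    simp only [mem_filter, mem_univ, true_and] at hw ⊢; simp only [SS] at hw ⊢
    obtain ⟨⟨ha, hb, hc, hd⟩, hs⟩ := hw
    exact ⟨ha, hb, hc, hd, neg_ne_zero.mpr hs, by ring⟩
  · rintro ⟨a,b,c,d,e⟩ hv
    simp only [mem_filter, mem_univ, true_and] at hv; simp only [SS] at hv
    obtain ⟨ha, hb, hc, hd, he, hs⟩ := hv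
    simp only [Prod.mk.injEq, true_and, and_true]
    linear_combination -hs
  · rintro ⟨a,b,c,d⟩ hw
    rfl

/-! ### torus bijections -/

/-- T1 : the all-nonzero part of the Klein cubic is in bijection with `Pset`. -/
lemma bijT1 : (univ.filter fun v : K5 p => v.1 ≠ 0 ∧ v.2.1 ≠ 0 ∧ v.2.2.1 ≠ 0
      ∧ v.2.2.2.1 ≠ 0 ∧ v.2.2.2.2 ≠ 0 ∧ FF v = 0).card
    = (univ.filter fun w : ZMod p × K5 p => w.1 ≠ 0 ∧ (w.2.1 ≠ 0 ∧ w.2.2.1 ≠ 0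
      ∧ w.2.2.2.1 ≠ 0 ∧ w.2.2.2.2.1 ≠ 0 ∧ w.2.2.2.2.2 ≠ 0 ∧ SS w.2 = 0
      ∧ w.1^33 * w.2.2.2.2.1^2 * w.2.2.1^8
        = w.2.2.2.2.2 * w.2.2.2.1^4 * w.2.1^16)).card := by
  apply card_nbij''
    (i := fun v => (v.1, (v.1^2*v.2.1, v.2.1^2*v.2.2.1, v.2.2.1^2*v.2.2.2.1,
      v.2.2.2.1^2*v.2.2.2.2, v.2.2.2.2^2*v.1)))
    (j := fun w => (w.1, w.2.1/w.1^2, w.2.2.1*w.1^4/w.2.1^2,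
      w.2.2.2.1*w.2.1^4/(w.2.2.1^2*w.1^8),
      w.2.2.2.2.1*w.2.2.1^4*w.1^16/(w.2.2.2.1^2*w.2.1^8)))
  · rintro ⟨a,b,c,d,e⟩ hv
    simp only [mem_filter, mem_univ, true_and] at hv; simp only [FF] at hv
    obtain ⟨ha, hb, hc, hd, he, hf⟩ := hv
    rw [mem_filter]
    refine ⟨mem_univ _, ha, mul_ne_zero (pow_ne_zero 2 ha) hb,
      mul_ne_zero (pow_ne_zero 2 hb) hc, mul_ne_zero (pow_ne_zero 2 hc) hd,
      mul_ne_zero (pow_ne_zero 2 hd) he, mul_ne_zero (pow_ne_zero 2 he) ha, ?_, by ring⟩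
    simp only [SS]
    exact hf
  · rintro ⟨t, y1, y2, y3, y4, y5⟩ hw
    simp only [mem_filter, mem_univ, true_and] at hw; simp only [SS] at hw
    obtain ⟨ht, h1, h2, h3, h4, h5, hsum, hpow⟩ := hw
    rw [mem_filter]
    have m1 : t^2*(y1/t^2) = y1 := by field_simp
    have m2 : (y1/t^2)^2*(y2*t^4/y1^2) = y2 := by field_simp
    have m3 : (y2*t^4/y1^2)^2*(y3*y1^4/(y2^2*t^8)) = y3 := by field_simp
    have m4 : (y3*y1^4/(y2^2*t^8))^2*(y4*y2^4*t^16/(y3^2*y1^8)) = y4 := by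
      field_simp
    have m5 : (y4*y2^4*t^16/(y3^2*y1^8))^2*t = y5 := by
      field_simp
      linear_combination hpow
    refine ⟨mem_univ _, ht, div_ne_zero h1 (pow_ne_zero 2 ht),
      div_ne_zero (mul_ne_zero h2 (pow_ne_zero 4 ht)) (pow_ne_zero 2 h1),
      div_ne_zero (mul_ne_zero h3 (pow_ne_zero 4 h1))
        (mul_ne_zero (pow_ne_zero 2 h2) (pow_ne_zero 8 ht)),
      div_ne_zero (mul_ne_zero (mul_ne_zero h4 (pow_ne_zero 4 h2)) (pow_ne_zero 16 ht))
        (mul_ne_zero (pow_ne_zero 2 h3) (pow_ne_zero 8 h1)), ?_⟩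
    simp only [FF]
    rw [m1, m2, m3, m4, m5]
    exact hsum
  · rintro ⟨a,b,c,d,e⟩ hv
    simp only [mem_filter, mem_univ, true_and] at hv; simp only [FF] at hv
    obtain ⟨ha, hb, hc, hd, he, hf⟩ := hv
    simp only [Prod.mk.injEq, true_and, and_true]
    refine ⟨?_, ?_, ?_, ?_⟩ <;> (field_simp; try ring)
  · rintro ⟨t, y1, y2, y3, y4, y5⟩ hw
    simp only [mem_filter, mem_univ, true_and] at hw; simp only [SS] at hw
    obtain ⟨ht, h1, h2, h3, h4, h5, hsum, hpow⟩ := hw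
    simp only [Prod.mk.injEq, true_and, and_true]
    refine ⟨?_, ?_, ?_, ?_, ?_⟩
    · field_simp
    · field_simp; try ring
    · field_simp; try ring
    · field_simp; try ring
    · field_simp
      linear_combination hpow

/-- T2 : scaling `Pset` to normalize the power condition. -/
lemma bijT2 : (univ.filter fun w : ZMod p × K5 p => w.1 ≠ 0 ∧ (w.2.1 ≠ 0 ∧ w.2.2.1 ≠ 0
      ∧ w.2.2.2.1 ≠ 0 ∧ w.2.2.2.2.1 ≠ 0 ∧ w.2.2.2.2.2 ≠ 0 ∧ SS w.2 = 0
      ∧ w.1^33 * w.2.2.2.2.1^2 * w.2.2.1^8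
        = w.2.2.2.2.2 * w.2.2.2.1^4 * w.2.1^16)).card
    = (univ.filter fun w : ZMod p × K5 p => w.1 ≠ 0 ∧ (w.2.1 ≠ 0 ∧ w.2.2.1 ≠ 0
      ∧ w.2.2.2.1 ≠ 0 ∧ w.2.2.2.2.1 ≠ 0 ∧ w.2.2.2.2.2 ≠ 0 ∧ SS w.2 = 0
      ∧ w.2.2.2.2.1^2 * w.2.2.1^8
        = w.2.2.2.2.2 * w.2.2.2.1^4 * w.2.1^16)).card := by
  apply card_nbij''
    (i := fun w => (w.1, (w.2.1/w.1^3, w.2.2.1/w.1^3, w.2.2.2.1/w.1^3,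
      w.2.2.2.2.1/w.1^3, w.2.2.2.2.2/w.1^3)))
    (j := fun w => (w.1, (w.1^3*w.2.1, w.1^3*w.2.2.1, w.1^3*w.2.2.2.1,
      w.1^3*w.2.2.2.2.1, w.1^3*w.2.2.2.2.2)))
  · rintro ⟨t, y1, y2, y3, y4, y5⟩ hw
    simp only [mem_filter, mem_univ, true_and] at hw; simp only [SS] at hw
    obtain ⟨ht, h1, h2, h3, h4, h5, hsum, hpow⟩ := hw
    have ht3 : t^3 ≠ 0 := pow_ne_zero 3 ht
    rw [mem_filter]
    refine ⟨mem_univ _, ht, div_ne_zero h1 ht3, div_ne_zero h2 ht3, div_ne_zero h3 ht3,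
      div_ne_zero h4 ht3, div_ne_zero h5 ht3, ?_, ?_⟩
    · simp only [SS]
      field_simp
      linear_combination hsum
    · field_simp
      linear_combination hpow
  · rintro ⟨t, z1, z2, z3, z4, z5⟩ hw
    simp only [mem_filter, mem_univ, true_and] at hw; simp only [SS] at hw
    obtain ⟨ht, h1, h2, h3, h4, h5, hsum, hcond⟩ := hw
    have ht3 : t^3 ≠ 0 := pow_ne_zero 3 ht
    rw [mem_filter]
    refine ⟨mem_univ _, ht, mul_ne_zero ht3 h1, mul_ne_zero ht3 h2, mul_ne_zero ht3 h3,
      mul_ne_zero ht3 h4, mul_ne_zero ht3 h5, ?_, ?_⟩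
    · simp only [SS]
      linear_combination t^3 * hsum
    · linear_combination t^63 * hcond
  · rintro ⟨t, y1, y2, y3, y4, y5⟩ hw
    simp only [mem_filter, mem_univ, true_and] at hw; simp only [SS] at hw
    obtain ⟨ht, h1, h2, h3, h4, h5, hsum, hpow⟩ := hw
    simp only [Prod.mk.injEq, true_and, and_true]
    refine ⟨?_, ?_, ?_, ?_, ?_⟩ <;> field_simp
  · rintro ⟨t, z1, z2, z3, z4, z5⟩ hw
    simp only [mem_filter, mem_univ, true_and] at hw; simp only [SS] at hw
    obtain ⟨ht, h1, h2, h3, h4, h5, hsum, hcond⟩ := hw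
    simp only [Prod.mk.injEq, true_and, and_true]
    refine ⟨?_, ?_, ?_, ?_, ?_⟩ <;> field_simp

/-- the T2/T3 target set has cardinality `(p-1) * |S1|`. -/
lemma tarT : (univ.filter fun w : ZMod p × K5 p => w.1 ≠ 0 ∧ (w.2.1 ≠ 0 ∧ w.2.2.1 ≠ 0
      ∧ w.2.2.2.1 ≠ 0 ∧ w.2.2.2.2.1 ≠ 0 ∧ w.2.2.2.2.2 ≠ 0 ∧ SS w.2 = 0
      ∧ w.2.2.2.2.1^2 * w.2.2.1^8
        = w.2.2.2.2.2 * w.2.2.2.1^4 * w.2.1^16)).card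
    = (p-1) * (univ.filter fun z : K5 p => z.1 ≠ 0 ∧ z.2.1 ≠ 0
      ∧ z.2.2.1 ≠ 0 ∧ z.2.2.2.1 ≠ 0 ∧ z.2.2.2.2 ≠ 0 ∧ SS z = 0
      ∧ z.2.2.2.1^2 * z.2.1^8 = z.2.2.2.2 * z.2.2.1^4 * z.1^16).card := by
  have h := card_filter_prod (fun y : ZMod p => y ≠ 0)
    (fun z : K5 p => z.1 ≠ 0 ∧ z.2.1 ≠ 0 ∧ z.2.2.1 ≠ 0 ∧ z.2.2.2.1 ≠ 0 ∧ z.2.2.2.2 ≠ 0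
      ∧ SS z = 0 ∧ z.2.2.2.1^2 * z.2.1^8 = z.2.2.2.2 * z.2.2.1^4 * z.1^16)
  rw [card_ne0] at h
  exact h

/-- T3 : the sum-zero torus is in bijection with the T2 target, via 11th roots. -/
lemma bijT3 (rho : ZMod p → ZMod p)
    (hr1 : ∀ a : ZMod p, a ≠ 0 → rho a ≠ 0)
    (hr2 : ∀ a : ZMod p, a ≠ 0 → (rho a)^11 = a)
    (hr3 : ∀ t : ZMod p, t ≠ 0 → rho (t^11) = t) :
    (univ.filter fun v : K5 p => v.1 ≠ 0 ∧ v.2.1 ≠ 0 ∧ v.2.2.1 ≠ 0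
      ∧ v.2.2.2.1 ≠ 0 ∧ v.2.2.2.2 ≠ 0 ∧ SS v = 0).card
    = (univ.filter fun w : ZMod p × K5 p => w.1 ≠ 0 ∧ (w.2.1 ≠ 0 ∧ w.2.2.1 ≠ 0
      ∧ w.2.2.2.1 ≠ 0 ∧ w.2.2.2.2.1 ≠ 0 ∧ w.2.2.2.2.2 ≠ 0 ∧ SS w.2 = 0
      ∧ w.2.2.2.2.1^2 * w.2.2.1^8
        = w.2.2.2.2.2 * w.2.2.2.1^4 * w.2.1^16)).card := by
  apply card_nbij''
    (i := fun v => (rho (v.2.2.2.2 * v.2.2.1^4 * v.1^16 / (v.2.2.2.1^2 * v.2.1^8)),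
      (v.1 / rho (v.2.2.2.2 * v.2.2.1^4 * v.1^16 / (v.2.2.2.1^2 * v.2.1^8)),
       v.2.1 / rho (v.2.2.2.2 * v.2.2.1^4 * v.1^16 / (v.2.2.2.1^2 * v.2.1^8)),
       v.2.2.1 / rho (v.2.2.2.2 * v.2.2.1^4 * v.1^16 / (v.2.2.2.1^2 * v.2.1^8)),
       v.2.2.2.1 / rho (v.2.2.2.2 * v.2.2.1^4 * v.1^16 / (v.2.2.2.1^2 * v.2.1^8)),
       v.2.2.2.2 / rho (v.2.2.2.2 * v.2.2.1^4 * v.1^16 / (v.2.2.2.1^2 * v.2.1^8)))))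
    (j := fun w => (w.1 * w.2.1, w.1 * w.2.2.1, w.1 * w.2.2.2.1,
      w.1 * w.2.2.2.2.1, w.1 * w.2.2.2.2.2))
  · rintro ⟨y1, y2, y3, y4, y5⟩ hv
    simp only [mem_filter, mem_univ, true_and] at hv; simp only [SS] at hv
    obtain ⟨h1, h2, h3, h4, h5, hsum⟩ := hv
    have hcy : y5 * y3^4 * y1^16 / (y4^2 * y2^8) ≠ 0 := by
      apply div_ne_zero
      · exact mul_ne_zero (mul_ne_zero h5 (pow_ne_zero 4 h3)) (pow_ne_zero 16 h1)
      · exact mul_ne_zero (pow_ne_zero 2 h4) (pow_ne_zero 8 h2)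
    have hT := hr1 _ hcy
    have hT11 := hr2 _ hcy
    set T := rho (y5 * y3^4 * y1^16 / (y4^2 * y2^8)) with hTdef
    have hkey : T^11 * (y4^2 * y2^8) = y5 * y3^4 * y1^16 := by
      rw [hT11]
      field_simp
    rw [mem_filter]
    refine ⟨mem_univ _, hT, div_ne_zero h1 hT, div_ne_zero h2 hT, div_ne_zero h3 hT,
      div_ne_zero h4 hT, div_ne_zero h5 hT, ?_, ?_⟩
    · simp only [SS]
      field_simp
      linear_combination hsum
    · field_simp
      linear_combination hkey
  · rintro ⟨t, z1, z2, z3, z4, z5⟩ hw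
    simp only [mem_filter, mem_univ, true_and] at hw; simp only [SS] at hw
    obtain ⟨ht, h1, h2, h3, h4, h5, hsum, hcond⟩ := hw
    rw [mem_filter]
    refine ⟨mem_univ _, mul_ne_zero ht h1, mul_ne_zero ht h2, mul_ne_zero ht h3,
      mul_ne_zero ht h4, mul_ne_zero ht h5, ?_⟩
    simp only [SS]
    linear_combination t * hsum
  · rintro ⟨y1, y2, y3, y4, y5⟩ hv
    simp only [mem_filter, mem_univ, true_and] at hv; simp only [SS] at hv
    obtain ⟨h1, h2, h3, h4, h5, hsum⟩ := hv
    have hcy : y5 * y3^4 * y1^16 / (y4^2 * y2^8) ≠ 0 := by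
      apply div_ne_zero
      · exact mul_ne_zero (mul_ne_zero h5 (pow_ne_zero 4 h3)) (pow_ne_zero 16 h1)
      · exact mul_ne_zero (pow_ne_zero 2 h4) (pow_ne_zero 8 h2)
    have hT := hr1 _ hcy
    simp only [Prod.mk.injEq, true_and, and_true]
    refine ⟨?_, ?_, ?_, ?_, ?_⟩ <;> field_simp
  · rintro ⟨t, z1, z2, z3, z4, z5⟩ hw
    simp only [mem_filter, mem_univ, true_and] at hw; simp only [SS] at hw
    obtain ⟨ht, h1, h2, h3, h4, h5, hsum, hcond⟩ := hw
    have harg : (t*z5) * (t*z3)^4 * (t*z1)^16 / ((t*z4)^2 * (t*z2)^8) = t^11 := by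
      rw [div_eq_iff (mul_ne_zero (pow_ne_zero 2 (mul_ne_zero ht h4))
        (pow_ne_zero 8 (mul_ne_zero ht h2)))]
      linear_combination (-(t^21)) * hcond
    simp only [Prod.mk.injEq, true_and, and_true]
    rw [harg, hr3 t ht]
    refine ⟨?_, ?_, ?_, ?_, ?_⟩ <;> field_simp <;> simp


/-! ### eleventh roots -/

lemma exists_rho (h11 : ¬ (11 ∣ (p - 1))) : ∃ rho : ZMod p → ZMod p,
    (∀ a : ZMod p, a ≠ 0 → rho a ≠ 0) ∧ (∀ a : ZMod p, a ≠ 0 → (rho a)^11 = a)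
      ∧ (∀ t : ZMod p, t ≠ 0 → rho (t^11) = t) := by
  have hcop : (Nat.card (ZMod p)ˣ).Coprime 11 := by
    rw [Nat.card_eq_fintype_card, ZMod.card_units]
    exact Nat.coprime_comm.mp ((Nat.Prime.coprime_iff_not_dvd (by norm_num)).mpr h11)
  refine ⟨fun a => if h : a = 0 then 0
    else (((powCoprime hcop).symm (Units.mk0 a h) : (ZMod p)ˣ) : ZMod p), ?_, ?_, ?_⟩
  · intro a ha
    dsimp only
    rw [dif_neg ha]
    exact Units.ne_zero _
  · intro a ha
    dsimp only
    rw [dif_neg ha]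
    have h1 : ((powCoprime hcop).symm (Units.mk0 a ha))^11
        = Units.mk0 a ha := by
      have := (powCoprime hcop).apply_symm_apply (Units.mk0 a ha)
      rwa [powCoprime_apply] at this
    have := congrArg (Units.val) h1
    simpa using this
  · intro t ht
    have hpne : t^11 ≠ 0 := pow_ne_zero _ ht
    dsimp only
    rw [dif_neg hpne]
    have hu : Units.mk0 (t^11) hpne = (Units.mk0 t ht)^11 := by
      ext; simp
    rw [hu]
    have h2 : (Units.mk0 t ht)^11 = powCoprime hcop (Units.mk0 t ht) := by
      rw [powCoprime_apply]
    rw [h2, (powCoprime hcop).symm_apply_apply]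
    rfl

/-! ### quadratic reciprocity input -/

lemma neg_eleven_square (hp2 : p ≠ 2) (hp11 : p % 11 = 1) :
    IsSquare (-11 : ZMod p) := by
  have h11 : Fact (Nat.Prime 11) := ⟨by norm_num⟩
  have hne11 : p ≠ 11 := by omega
  have hnz : ((-11 : ℤ) : ZMod p) ≠ 0 := by
    push_cast
    intro h
    have h' : ((11 : ℕ) : ZMod p) = 0 := by
      have := neg_eq_zero.mp h
      exact_mod_cast this
    have := (ZMod.natCast_eq_zero_iff 11 p).mp h'
    exact hne11 ((Nat.prime_dvd_prime_iff_eq hfp.out (by norm_num)).mp this)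
  have h1 : legendreSym 11 (p : ℤ) = 1 := by
    rw [legendreSym.mod]
    have h : ((p : ℤ)) % (11 : ℕ) = 1 := by omega
    rw [h, legendreSym.at_one]
  have hcast : ((11:ℕ) : ℤ) = (11 : ℤ) := by norm_num
  have key : legendreSym p (-11) = 1 := by
    have hmul : legendreSym p (-11) = legendreSym p (-1) * legendreSym p 11 := by
      rw [← legendreSym.mul]; norm_num
    have hodd : p % 2 = 1 := hfp.out.eq_two_or_odd.resolve_left hp2
    rcases Nat.odd_mod_four_iff.mp hodd with h4 | h4
    · have h := legendreSym.quadratic_reciprocity_one_mod_four h4 (by norm_num : (11:ℕ) ≠ 2)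
      rw [hcast] at h
      rw [hmul, legendreSym.at_neg_one hp2, ZMod.χ₄_nat_one_mod_four h4, ← h, h1]; ring
    · have h := legendreSym.quadratic_reciprocity_three_mod_four h4
        (by norm_num : (11:ℕ) % 4 = 3)
      rw [hcast, h1] at h
      have h2 : legendreSym p 11 = -1 := by linarith
      rw [hmul, legendreSym.at_neg_one hp2, ZMod.χ₄_nat_three_mod_four h4, h2]; ring
  have := (legendreSym.eq_one_iff p hnz).mp key
  convert this using 1
  push_cast
  ring

/-! ### the master count -/

lemma count_filter (h11 : ¬ (11 ∣ (p - 1))) :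
    (univ.filter fun v : K5 p => FF v = 0).card = p^4 := by
  obtain ⟨rho, hr1, hr2, hr3⟩ := exists_rho h11
  -- partition
  have n1 := split_card (fun v : K5 p => FF v = 0) (fun v => v.1 = 0)
    (fun v : K5 p => v.1 = 0 ∧ FF v = 0) (fun v : K5 p => v.1 ≠ 0 ∧ FF v = 0)
    (fun v => by tauto) (fun v => by tauto)
  have n2 := split_card (fun v : K5 p => v.1 = 0 ∧ FF v = 0) (fun v => v.2.2.2.1 = 0)
    (fun v : K5 p => v.1 = 0 ∧ v.2.2.2.1 = 0 ∧ FF v = 0)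
    (fun v : K5 p => v.1 = 0 ∧ v.2.2.2.1 ≠ 0 ∧ FF v = 0)
    (fun v => by tauto) (fun v => by tauto)
  have n3 := split_card (fun v : K5 p => v.1 = 0 ∧ v.2.2.2.1 = 0 ∧ FF v = 0)
    (fun v => v.2.1 = 0)
    (fun v : K5 p => v.1 = 0 ∧ v.2.1 = 0 ∧ v.2.2.2.1 = 0 ∧ FF v = 0)
    (fun v : K5 p => v.1 = 0 ∧ v.2.1 ≠ 0 ∧ v.2.2.2.1 = 0 ∧ FF v = 0)
    (fun v => by tauto) (fun v => by tauto)
  have n4 := split_card (fun v : K5 p => v.1 ≠ 0 ∧ FF v = 0) (fun v => v.2.1 = 0)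
    (fun v : K5 p => v.1 ≠ 0 ∧ v.2.1 = 0 ∧ FF v = 0)
    (fun v : K5 p => v.1 ≠ 0 ∧ v.2.1 ≠ 0 ∧ FF v = 0)
    (fun v => by tauto) (fun v => by tauto)
  have n5 := split_card (fun v : K5 p => v.1 ≠ 0 ∧ v.2.1 = 0 ∧ FF v = 0)
    (fun v => v.2.2.1 = 0)
    (fun v : K5 p => v.1 ≠ 0 ∧ v.2.1 = 0 ∧ v.2.2.1 = 0 ∧ FF v = 0)
    (fun v : K5 p => v.1 ≠ 0 ∧ v.2.1 = 0 ∧ v.2.2.1 ≠ 0 ∧ FF v = 0)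
    (fun v => by tauto) (fun v => by tauto)
  have n6 := split_card (fun v : K5 p => v.1 ≠ 0 ∧ v.2.1 = 0 ∧ v.2.2.1 = 0 ∧ FF v = 0)
    (fun v => v.2.2.2.2 = 0)
    (fun v : K5 p => v.1 ≠ 0 ∧ v.2.1 = 0 ∧ v.2.2.1 = 0 ∧ v.2.2.2.2 = 0 ∧ FF v = 0)
    (fun v : K5 p => v.1 ≠ 0 ∧ v.2.1 = 0 ∧ v.2.2.1 = 0 ∧ v.2.2.2.2 ≠ 0 ∧ FF v = 0)
    (fun v => by tauto) (fun v => by tauto)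
  have n7 := split_card (fun v : K5 p => v.1 ≠ 0 ∧ v.2.1 = 0 ∧ v.2.2.1 ≠ 0 ∧ FF v = 0)
    (fun v => v.2.2.2.2 = 0)
    (fun v : K5 p => v.1 ≠ 0 ∧ v.2.1 = 0 ∧ v.2.2.1 ≠ 0 ∧ v.2.2.2.2 = 0 ∧ FF v = 0)
    (fun v : K5 p => v.1 ≠ 0 ∧ v.2.1 = 0 ∧ v.2.2.1 ≠ 0 ∧ v.2.2.2.2 ≠ 0 ∧ FF v = 0)
    (fun v => by tauto) (fun v => by tauto)
  have n8 := split_card (fun v : K5 p => v.1 ≠ 0 ∧ v.2.1 ≠ 0 ∧ FF v = 0)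
    (fun v => v.2.2.1 = 0)
    (fun v : K5 p => v.1 ≠ 0 ∧ v.2.1 ≠ 0 ∧ v.2.2.1 = 0 ∧ FF v = 0)
    (fun v : K5 p => v.1 ≠ 0 ∧ v.2.1 ≠ 0 ∧ v.2.2.1 ≠ 0 ∧ FF v = 0)
    (fun v => by tauto) (fun v => by tauto)
  have n9 := split_card (fun v : K5 p => v.1 ≠ 0 ∧ v.2.1 ≠ 0 ∧ v.2.2.1 = 0 ∧ FF v = 0)
    (fun v => v.2.2.2.1 = 0)
    (fun v : K5 p => v.1 ≠ 0 ∧ v.2.1 ≠ 0 ∧ v.2.2.1 = 0 ∧ v.2.2.2.1 = 0 ∧ FF v = 0)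
    (fun v : K5 p => v.1 ≠ 0 ∧ v.2.1 ≠ 0 ∧ v.2.2.1 = 0 ∧ v.2.2.2.1 ≠ 0 ∧ FF v = 0)
    (fun v => by tauto) (fun v => by tauto)
  have n10 := split_card (fun v : K5 p => v.1 ≠ 0 ∧ v.2.1 ≠ 0 ∧ v.2.2.1 ≠ 0 ∧ FF v = 0)
    (fun v => v.2.2.2.1 = 0)
    (fun v : K5 p => v.1 ≠ 0 ∧ v.2.1 ≠ 0 ∧ v.2.2.1 ≠ 0 ∧ v.2.2.2.1 = 0 ∧ FF v = 0)
    (fun v : K5 p => v.1 ≠ 0 ∧ v.2.1 ≠ 0 ∧ v.2.2.1 ≠ 0 ∧ v.2.2.2.1 ≠ 0 ∧ FF v = 0)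
    (fun v => by tauto) (fun v => by tauto)
  have n11 := split_card
    (fun v : K5 p => v.1 ≠ 0 ∧ v.2.1 ≠ 0 ∧ v.2.2.1 ≠ 0 ∧ v.2.2.2.1 = 0 ∧ FF v = 0)
    (fun v => v.2.2.2.2 = 0)
    (fun v : K5 p => v.1 ≠ 0 ∧ v.2.1 ≠ 0 ∧ v.2.2.1 ≠ 0 ∧ v.2.2.2.1 = 0 ∧ v.2.2.2.2 = 0
      ∧ FF v = 0)
    (fun v : K5 p => v.1 ≠ 0 ∧ v.2.1 ≠ 0 ∧ v.2.2.1 ≠ 0 ∧ v.2.2.2.1 = 0 ∧ v.2.2.2.2 ≠ 0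
      ∧ FF v = 0)
    (fun v => by tauto) (fun v => by tauto)
  have n12 := split_card
    (fun v : K5 p => v.1 ≠ 0 ∧ v.2.1 ≠ 0 ∧ v.2.2.1 ≠ 0 ∧ v.2.2.2.1 ≠ 0 ∧ FF v = 0)
    (fun v => v.2.2.2.2 = 0)
    (fun v : K5 p => v.1 ≠ 0 ∧ v.2.1 ≠ 0 ∧ v.2.2.1 ≠ 0 ∧ v.2.2.2.1 ≠ 0 ∧ v.2.2.2.2 = 0
      ∧ FF v = 0)
    (fun v : K5 p => v.1 ≠ 0 ∧ v.2.1 ≠ 0 ∧ v.2.2.1 ≠ 0 ∧ v.2.2.2.1 ≠ 0 ∧ v.2.2.2.2 ≠ 0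
      ∧ FF v = 0)
    (fun v => by tauto) (fun v => by tauto)
  -- torus part equals sum-zero torus
  have hTor : (univ.filter fun v : K5 p => v.1 ≠ 0 ∧ v.2.1 ≠ 0 ∧ v.2.2.1 ≠ 0
      ∧ v.2.2.2.1 ≠ 0 ∧ v.2.2.2.2 ≠ 0 ∧ FF v = 0).card
      = (univ.filter fun v : K5 p => v.1 ≠ 0 ∧ v.2.1 ≠ 0 ∧ v.2.2.1 ≠ 0
      ∧ v.2.2.2.1 ≠ 0 ∧ v.2.2.2.2 ≠ 0 ∧ SS v = 0).card := by
    rw [bijT1, bijT2, ← bijT3 rho hr1 hr2 hr3]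
  -- sum-zero chain
  have m2 := split_card (fun w : ZMod p × ZMod p => w.1 ≠ 0 ∧ w.2 ≠ 0)
    (fun w => w.1 + w.2 = 0)
    (fun w : ZMod p × ZMod p => w.1 ≠ 0 ∧ w.2 ≠ 0 ∧ w.1 + w.2 = 0)
    (fun w : ZMod p × ZMod p => (w.1 ≠ 0 ∧ w.2 ≠ 0) ∧ ¬ (w.1 + w.2 = 0))
    (fun v => by tauto) (fun v => by tauto)
  have m3 := split_card
    (fun w : ZMod p × ZMod p × ZMod p => w.1 ≠ 0 ∧ (w.2.1 ≠ 0 ∧ w.2.2 ≠ 0))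
    (fun w => w.1 + w.2.1 + w.2.2 = 0)
    (fun w : ZMod p × ZMod p × ZMod p =>
      w.1 ≠ 0 ∧ w.2.1 ≠ 0 ∧ w.2.2 ≠ 0 ∧ w.1 + w.2.1 + w.2.2 = 0)
    (fun w : ZMod p × ZMod p × ZMod p =>
      (w.1 ≠ 0 ∧ (w.2.1 ≠ 0 ∧ w.2.2 ≠ 0)) ∧ ¬ (w.1 + w.2.1 + w.2.2 = 0))
    (fun v => by tauto) (fun v => by tauto)
  have m4 := split_card
    (fun w : ZMod p × ZMod p × ZMod p × ZMod p =>
      w.1 ≠ 0 ∧ (w.2.1 ≠ 0 ∧ (w.2.2.1 ≠ 0 ∧ w.2.2.2 ≠ 0)))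
    (fun w => w.1 + w.2.1 + w.2.2.1 + w.2.2.2 = 0)
    (fun w : ZMod p × ZMod p × ZMod p × ZMod p =>
      w.1 ≠ 0 ∧ w.2.1 ≠ 0 ∧ w.2.2.1 ≠ 0 ∧ w.2.2.2 ≠ 0
        ∧ w.1 + w.2.1 + w.2.2.1 + w.2.2.2 = 0)
    (fun w : ZMod p × ZMod p × ZMod p × ZMod p =>
      (w.1 ≠ 0 ∧ (w.2.1 ≠ 0 ∧ (w.2.2.1 ≠ 0 ∧ w.2.2.2 ≠ 0)))
        ∧ ¬ (w.1 + w.2.1 + w.2.2.1 + w.2.2.2 = 0))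
    (fun v => by tauto) (fun v => by tauto)
  rw [tarA] at m2
  rw [← bijZ3] at m2
  rw [tarNe3] at m3
  rw [← bijZ4] at m3
  rw [tarNe4] at m4
  rw [← bijZ5] at m4
  have hz2 := @cardZ2 p _
  rw [hTor] at n12
  rw [leaf1a] at n2
  rw [leaf1bi, leaf1bii] at n3
  rw [leaf2bi, leaf2ai] at n6
  rw [leaf2bii, leaf2aii] at n7
  rw [leaf3i, leaf3ii] at n9
  rw [leaf4i, leaf4ii] at n11
  rw [leaf5] at n12
  have h2le : 2 ≤ p := hfp.out.two_le
  have h1le : 1 ≤ p := by omega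
  zify [h1le, h2le] at n1 n2 n3 n4 n5 n6 n7 n8 n9 n10 n11 n12 m2 m3 m4 hz2 ⊢
  linarith

end KleinAux

open KleinAux in
/-- For a prime `p ≥ 5`, `p ≠ 11`, such that `−11` is not a square in `𝔽_p`, the Klein
cubic `x₁²x₂ + x₂²x₃ + x₃²x₄ + x₄²x₅ + x₅²x₁ = 0` has exactly `p⁴` solutions in `𝔽_p⁵`;
equivalently, the Klein cubic threefold has `1 + p + p² + p³` points in `ℙ⁴(𝔽_p)`. -/
theorem klein_cubic_count_Fp (p : ℕ) (hp : p.Prime) (hp5 : 5 ≤ p) (hp11 : p ≠ 11)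
    (hns : ¬ IsSquare (-11 : ZMod p)) :
    Nat.card {x : Fin 5 → ZMod p //
        (x 0) ^ 2 * x 1 + (x 1) ^ 2 * x 2 + (x 2) ^ 2 * x 3 + (x 3) ^ 2 * x 4
          + (x 4) ^ 2 * x 0 = 0} = p ^ 4 := by
  haveI hfp : Fact p.Prime := ⟨hp⟩
  have h2 : p ≠ 2 := by omega
  have h11 : ¬ (11 ∣ (p - 1)) := by
    intro hdvd
    exact hns (KleinAux.neg_eleven_square h2 (by omega))
  have e : {x : Fin 5 → ZMod p //
        (x 0) ^ 2 * x 1 + (x 1) ^ 2 * x 2 + (x 2) ^ 2 * x 3 + (x 3) ^ 2 * x 4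
          + (x 4) ^ 2 * x 0 = 0} ≃ {v : K5 p // FF v = 0} :=
    { toFun := fun x => ⟨(x.1 0, x.1 1, x.1 2, x.1 3, x.1 4), x.2⟩
      invFun := fun v => ⟨![v.1.1, v.1.2.1, v.1.2.2.1, v.1.2.2.2.1, v.1.2.2.2.2], by
        obtain ⟨⟨a,b,c,d,e⟩, hv⟩ := v
        exact hv⟩
      left_inv := fun x => Subtype.ext (funext fun i => by fin_cases i <;> rfl)
      right_inv := fun v => Subtype.ext rfl }
  rw [Nat.card_congr e, Nat.card_eq_fintype_card, Fintype.card_subtype]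
  exact KleinAux.count_filter h11
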